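/- (Guesswork moment exponents for i.i.d. Bernoulli noise.) Let p ∈ (0,1), and for each n let N^n be a random vector in {0,1}^n whose coordinates are i.i.d. Bernoulli(p), so P(N^n = z) = p^{w(z)} (1−p)^{n−w(z)} where w(z) is the Hamming weight of z. Let G_n : {0,1}^n → {1, …, 2^n} be any bijection satisfying G_n(z) ≤ G_n(z′) whenever P(N^n = z) ≥ P(N^n = z′). Then for every α ∈ (−1, ∞), lim_{n→∞} (1/n) log₂ E[G_n(N^n)^α] = (1+α) log₂( (1−p)^{1/(1+α)} + p^{1/(1+α)} ), and for every α ≤ −1, lim_{n→∞} (1/n) log₂ E[G_n(N^n)^α] = log₂( max(1−p, p) ). -/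

import Mathlib

open Filter Set Topology

/-- The Hamming weight of a binary string `z ∈ {0,1}ⁿ`. -/
def hammingWeight {n : ℕ} (z : Fin n → Bool) : ℕ :=
  (Finset.univ.filter fun i => z i = true).card

/-- The Bernoulli(p) i.i.d. probability of the string `z ∈ {0,1}ⁿ`:
`P(Nⁿ = z) = p^{w(z)} (1-p)^{n-w(z)}`. -/
noncomputable def bernoulliMass (p : ℝ) {n : ℕ} (z : Fin n → Bool) : ℝ :=
  p ^ hammingWeight z * (1 - p) ^ (n - hammingWeight z)

lemma hammingWeight_le {n : ℕ} (z : Fin n → Bool) : hammingWeight z ≤ n := by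
  simpa [hammingWeight] using (Finset.card_filter_le Finset.univ fun i => z i = true)

lemma bernoulliMass_pos {p : ℝ} (hp : p ∈ Set.Ioo (0:ℝ) 1) {n : ℕ} (z : Fin n → Bool) :
    0 < bernoulliMass p z := by
  have h1 : 0 < p := hp.1
  have h2 : 0 < 1 - p := by have := hp.2; linarith
  exact mul_pos (pow_pos h1 _) (pow_pos h2 _)

lemma bernoulliMass_le_max_pow {p : ℝ} (hp : p ∈ Set.Ioo (0:ℝ) 1) {n : ℕ} (z : Fin n → Bool) :
    bernoulliMass p z ≤ max (1 - p) p ^ n := by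
  have h1 : 0 < p := hp.1
  have h2 : 0 < 1 - p := by have := hp.2; linarith
  have hw := hammingWeight_le z
  calc bernoulliMass p z = p ^ hammingWeight z * (1 - p) ^ (n - hammingWeight z) := rfl
    _ ≤ max (1-p) p ^ hammingWeight z * max (1-p) p ^ (n - hammingWeight z) := by
        apply mul_le_mul (pow_le_pow_left₀ h1.le (le_max_right _ _) _)
          (pow_le_pow_left₀ h2.le (le_max_left _ _) _) (by positivity) (by positivity)
    _ = max (1-p) p ^ n := by rw [← pow_add]; congr 1; omega

lemma sum_bernoulliMass_rpow {p : ℝ} (hp : p ∈ Set.Ioo (0:ℝ) 1) (n : ℕ) (s : ℝ) :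
    ∑ z : Fin n → Bool, bernoulliMass p z ^ s = ((1 - p) ^ s + p ^ s) ^ n := by
  have h1 : 0 < p := hp.1
  have h2 : 0 < 1 - p := by have := hp.2; linarith
  have key : ∀ z : Fin n → Bool, bernoulliMass p z ^ s
      = ∏ i, (if z i then p ^ s else (1 - p) ^ s) := by
    intro z
    rw [Finset.prod_ite, Finset.prod_const, Finset.prod_const]
    have hcard : (Finset.univ.filter fun i => ¬ z i = true).card = n - hammingWeight z := by
      have := Finset.card_filter_add_card_filter_not (s := (Finset.univ : Finset (Fin n)))
        (p := fun i => z i = true)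
      simp only [Finset.card_univ, Fintype.card_fin] at this
      unfold hammingWeight
      omega
    rw [hcard]
    unfold bernoulliMass
    rw [Real.mul_rpow (by positivity) (by positivity),
        ← Real.rpow_natCast p (hammingWeight z),
        ← Real.rpow_natCast (1-p) (n - hammingWeight z),
        ← Real.rpow_mul h1.le, ← Real.rpow_mul h2.le,
        mul_comm (hammingWeight z : ℝ) s, mul_comm ((n - hammingWeight z : ℕ) : ℝ) s,
        Real.rpow_mul h1.le, Real.rpow_mul h2.le, Real.rpow_natCast, Real.rpow_natCast]
    rfl
  simp only [key]
  rw [← Fintype.prod_sum (κ := fun _ : Fin n => Bool) (f := fun _ b => if b then p ^ s else (1-p) ^ s)]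
  simp [add_comm]

lemma image_G {n : ℕ} {G : (Fin n → Bool) → ℕ}
    (hval : ∀ z, G z ∈ Finset.Icc 1 (2 ^ n)) (hinj : Function.Injective G) :
    Finset.univ.image G = Finset.Icc 1 (2 ^ n) := by
  apply Finset.eq_of_subset_of_card_le
  · intro k hk
    obtain ⟨z, _, rfl⟩ := Finset.mem_image.mp hk
    exact hval z
  · rw [Finset.card_image_of_injective _ hinj, Nat.card_Icc, Finset.card_univ]
    simp [Fintype.card_fun]

lemma card_rank {n : ℕ} {G : (Fin n → Bool) → ℕ}
    (hval : ∀ z, G z ∈ Finset.Icc 1 (2 ^ n)) (hinj : Function.Injective G)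
    (z : Fin n → Bool) :
    (Finset.univ.filter fun z' => G z' ≤ G z).card = G z := by
  have himg : (Finset.univ.filter fun z' => G z' ≤ G z).image G = Finset.Icc 1 (G z) := by
    apply Finset.Subset.antisymm
    · intro k hk
      obtain ⟨z', hz', rfl⟩ := Finset.mem_image.mp hk
      rw [Finset.mem_filter] at hz'
      exact Finset.mem_Icc.mpr ⟨(Finset.mem_Icc.mp (hval z')).1, hz'.2⟩
    · intro k hk
      rw [Finset.mem_Icc] at hk
      have hk2 : k ∈ Finset.Icc 1 (2 ^ n) :=
        Finset.mem_Icc.mpr ⟨hk.1, le_trans hk.2 (Finset.mem_Icc.mp (hval z)).2⟩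
      rw [← image_G hval hinj] at hk2
      obtain ⟨z', _, rfl⟩ := Finset.mem_image.mp hk2
      exact Finset.mem_image.mpr ⟨z', Finset.mem_filter.mpr ⟨Finset.mem_univ _, hk.2⟩, rfl⟩
  have := Finset.card_image_of_injective
    (Finset.univ.filter fun z' => G z' ≤ G z) hinj
  rw [himg, Nat.card_Icc] at this
  omega

lemma rank_mul_le {p : ℝ} (hp : p ∈ Set.Ioo (0:ℝ) 1) {n : ℕ} {G : (Fin n → Bool) → ℕ}
    (hval : ∀ z, G z ∈ Finset.Icc 1 (2 ^ n)) (hinj : Function.Injective G)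
    (hord : ∀ z z' : Fin n → Bool, G z ≤ G z' → bernoulliMass p z' ≤ bernoulliMass p z)
    {s : ℝ} (hs : 0 ≤ s) (z : Fin n → Bool) :
    (G z : ℝ) * bernoulliMass p z ^ s ≤ ((1 - p) ^ s + p ^ s) ^ n := by
  have hA := card_rank hval hinj z
  calc (G z : ℝ) * bernoulliMass p z ^ s
      = ∑ _z' ∈ (Finset.univ.filter fun z' => G z' ≤ G z), bernoulliMass p z ^ s := by
        rw [Finset.sum_const, nsmul_eq_mul, hA]
    _ ≤ ∑ z' ∈ (Finset.univ.filter fun z' => G z' ≤ G z), bernoulliMass p z' ^ s := by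
        apply Finset.sum_le_sum
        intro z' hz'
        rw [Finset.mem_filter] at hz'
        exact Real.rpow_le_rpow (bernoulliMass_pos hp z).le (hord z' z hz'.2) hs
    _ ≤ ∑ z' : Fin n → Bool, bernoulliMass p z' ^ s := by
        apply Finset.sum_le_sum_of_subset_of_nonneg (Finset.subset_univ _)
        intro z' _ _
        exact Real.rpow_nonneg (bernoulliMass_pos hp z').le s
    _ = ((1 - p) ^ s + p ^ s) ^ n := sum_bernoulliMass_rpow hp n s

lemma sum_Ioc_inv_le (n : ℕ) : ∑ k ∈ Finset.Ioc (0:ℕ) (2 ^ n), (k : ℝ)⁻¹ ≤ n + 1 := by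
  induction n with
  | zero => norm_num
  | succ n ih =>
    have h2 : 2 ^ n ≤ 2 ^ (n + 1) := Nat.pow_le_pow_right (by norm_num) (by omega)
    rw [← Finset.sum_Ioc_consecutive _ (Nat.zero_le (2 ^ n)) h2]
    have hb : ∑ k ∈ Finset.Ioc (2 ^ n) (2 ^ (n+1)), ((k : ℕ) : ℝ)⁻¹ ≤ 1 := by
      have hcard : (Finset.Ioc (2 ^ n) (2 ^ (n+1))).card = 2 ^ n := by
        rw [Nat.card_Ioc]; omega
      calc ∑ k ∈ Finset.Ioc (2 ^ n) (2 ^ (n+1)), ((k : ℕ) : ℝ)⁻¹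
          ≤ (Finset.Ioc (2 ^ n) (2 ^ (n+1))).card • (((2 : ℝ) ^ n))⁻¹ := by
            apply Finset.sum_le_card_nsmul
            intro k hk
            rw [Finset.mem_Ioc] at hk
            apply inv_anti₀ (by positivity)
            exact_mod_cast (le_of_lt hk.1)
        _ = 1 := by
            rw [hcard, nsmul_eq_mul]
            push_cast
            rw [mul_inv_cancel₀ (by positivity)]
    push_cast
    push_cast at ih hb
    linarith

lemma sum_G_inv_le {n : ℕ} {G : (Fin n → Bool) → ℕ}
    (hval : ∀ z, G z ∈ Finset.Icc 1 (2 ^ n)) (hinj : Function.Injective G) :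
    ∑ z : Fin n → Bool, ((G z : ℕ) : ℝ)⁻¹ ≤ n + 1 := by
  have h : ∑ k ∈ Finset.univ.image G, ((k:ℕ):ℝ)⁻¹ = ∑ z : Fin n → Bool, ((G z : ℕ) : ℝ)⁻¹ :=
    Finset.sum_image (fun x _ y _ h => hinj h)
  rw [image_G hval hinj] at h
  rw [← h]
  have he : Finset.Icc 1 (2 ^ n) = Finset.Ioc (0:ℕ) (2 ^ n) := rfl
  rw [he]
  exact sum_Ioc_inv_le n

lemma tendsto_logdiv : Filter.Tendsto (fun n : ℕ => Real.log ((n:ℝ)+1) / (n:ℝ))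
    Filter.atTop (nhds 0) := by
  have h1 : Filter.Tendsto (fun n : ℕ => (n:ℝ)+1) Filter.atTop Filter.atTop :=
    Filter.tendsto_atTop_add_const_right _ _ tendsto_natCast_atTop_atTop
  have h2 : (fun n : ℕ => Real.log ((n:ℝ)+1)) =o[Filter.atTop] (fun n : ℕ => (n:ℝ)+1) :=
    Real.isLittleO_log_id_atTop.comp_tendsto h1
  have h3 : (fun n : ℕ => (n:ℝ)+1) =O[Filter.atTop] (fun n : ℕ => (n:ℝ)) := by
    rw [Asymptotics.isBigO_iff]
    refine ⟨2, Filter.eventually_atTop.mpr ⟨1, fun n hn => ?_⟩⟩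
    have : (1:ℝ) ≤ n := by exact_mod_cast hn
    rw [Real.norm_eq_abs, Real.norm_eq_abs, abs_of_nonneg (by linarith), abs_of_nonneg (by linarith)]
    linarith
  exact (h2.trans_isBigO h3).tendsto_div_nhds_zero

lemma tendsto_inv_mul_logb (E : ℕ → ℝ) (c K : ℝ)
    (hlow : ∀ n : ℕ, (n:ℝ) * c - K * Real.logb 2 ((n:ℝ)+1) ≤ Real.logb 2 (E n))
    (hup : ∀ n : ℕ, Real.logb 2 (E n) ≤ (n:ℝ) * c + K * Real.logb 2 ((n:ℝ)+1)) :
    Filter.Tendsto (fun n : ℕ => (n:ℝ)⁻¹ * Real.logb 2 (E n)) Filter.atTop (nhds c) := by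
  have h0 : Filter.Tendsto (fun n : ℕ => K * Real.logb 2 ((n:ℝ)+1) / (n:ℝ))
      Filter.atTop (nhds 0) := by
    have := (tendsto_logdiv.const_mul (K / Real.log 2))
    rw [mul_zero] at this
    convert this using 2 with n
    rw [Real.logb]
    ring
  have hc : Filter.Tendsto (fun _ : ℕ => c) Filter.atTop (nhds c) := tendsto_const_nhds
  have hlo : Filter.Tendsto (fun n : ℕ => c - K * Real.logb 2 ((n:ℝ)+1) / (n:ℝ))
      Filter.atTop (nhds c) := by simpa using hc.sub h0
  have hhi : Filter.Tendsto (fun n : ℕ => c + K * Real.logb 2 ((n:ℝ)+1) / (n:ℝ))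
      Filter.atTop (nhds c) := by simpa using hc.add h0
  apply tendsto_of_tendsto_of_tendsto_of_le_of_le' hlo hhi
  · filter_upwards [Filter.eventually_atTop.mpr ⟨1, fun n hn => hn⟩] with n hn
    have hn0 : (0:ℝ) < n := by exact_mod_cast hn
    have heq : c - K * Real.logb 2 ((n:ℝ)+1) / (n:ℝ)
        = ((n:ℝ) * c - K * Real.logb 2 ((n:ℝ)+1)) / (n:ℝ) := by
      field_simp [mul_comm]
    rw [heq, inv_mul_eq_div, div_le_div_iff_of_pos_right hn0]
    exact hlow n
  · filter_upwards [Filter.eventually_atTop.mpr ⟨1, fun n hn => hn⟩] with n hn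
    have hn0 : (0:ℝ) < n := by exact_mod_cast hn
    have heq : c + K * Real.logb 2 ((n:ℝ)+1) / (n:ℝ)
        = ((n:ℝ) * c + K * Real.logb 2 ((n:ℝ)+1)) / (n:ℝ) := by
      field_simp [mul_comm]
    rw [heq, inv_mul_eq_div, div_le_div_iff_of_pos_right hn0]
    exact hup n

section Bounds

variable {p : ℝ} (hp : p ∈ Set.Ioo (0:ℝ) 1) {n : ℕ} {G : (Fin n → Bool) → ℕ}
  (hval : ∀ z, G z ∈ Finset.Icc 1 (2 ^ n)) (hinj : Function.Injective G)
  (hord : ∀ z z' : Fin n → Bool, G z ≤ G z' → bernoulliMass p z' ≤ bernoulliMass p z)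
  {α : ℝ} (hα : -1 < α)

include hp in
lemma B_pos : 0 < (1 - p) ^ (1+α)⁻¹ + p ^ (1+α)⁻¹ := by
  have h1 : 0 < p := hp.1
  have h2 : 0 < 1 - p := by have := hp.2; linarith
  have := Real.rpow_pos_of_pos h1 (1+α)⁻¹
  have := Real.rpow_pos_of_pos h2 (1+α)⁻¹
  linarith

include hα hp in
lemma sum_mass_div_rpow :
    ∑ z : Fin n → Bool, bernoulliMass p z *
        ((((1-p) ^ (1+α)⁻¹ + p ^ (1+α)⁻¹) ^ n) / bernoulliMass p z ^ (1+α)⁻¹) ^ α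
      = ((((1-p) ^ (1+α)⁻¹ + p ^ (1+α)⁻¹) ^ n)) ^ (1+α) := by
  set s : ℝ := (1+α)⁻¹ with hs
  have h1α : (0:ℝ) < 1 + α := by linarith
  have hBn : 0 < ((1-p) ^ s + p ^ s) ^ n := pow_pos (B_pos hp) n
  have key : ∀ z : Fin n → Bool, bernoulliMass p z *
      ((((1-p) ^ s + p ^ s) ^ n) / bernoulliMass p z ^ s) ^ α
      = bernoulliMass p z ^ s * ((((1-p) ^ s + p ^ s) ^ n)) ^ α := by
    intro z
    have hm : 0 < bernoulliMass p z := bernoulliMass_pos hp z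
    have h2 : (1:ℝ) - s * α = s := by rw [hs]; field_simp; ring
    have h3 : bernoulliMass p z ^ ((1:ℝ) - s * α)
        = bernoulliMass p z / bernoulliMass p z ^ (s * α) := by
      rw [Real.rpow_sub hm, Real.rpow_one]
    rw [h2] at h3
    rw [Real.div_rpow hBn.le (Real.rpow_nonneg hm.le s), ← Real.rpow_mul hm.le, h3]
    have hne : bernoulliMass p z ^ (s * α) ≠ 0 := (Real.rpow_pos_of_pos hm (s*α)).ne'
    field_simp
  simp only [key]
  rw [← Finset.sum_mul, sum_bernoulliMass_rpow hp n s, Real.rpow_add hBn, Real.rpow_one]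

include hα hp hval hinj hord in
lemma En_upper_nonneg (hα0 : 0 ≤ α) :
    ∑ z : Fin n → Bool, bernoulliMass p z * (G z : ℝ) ^ α
      ≤ ((((1-p) ^ (1+α)⁻¹ + p ^ (1+α)⁻¹) ^ n)) ^ (1+α) := by
  have h1α : (0:ℝ) < 1 + α := by linarith
  rw [← sum_mass_div_rpow hp hα]
  apply Finset.sum_le_sum
  intro z _
  have hm : 0 < bernoulliMass p z := bernoulliMass_pos hp z
  have hms : 0 < bernoulliMass p z ^ (1+α)⁻¹ := Real.rpow_pos_of_pos hm _
  have hrank : (G z : ℝ) ≤ (((1-p) ^ (1+α)⁻¹ + p ^ (1+α)⁻¹) ^ n) / bernoulliMass p z ^ (1+α)⁻¹ :=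
    (le_div_iff₀ hms).mpr (rank_mul_le hp hval hinj hord (by positivity) z)
  exact mul_le_mul_of_nonneg_left
    (Real.rpow_le_rpow (Nat.cast_nonneg _) hrank hα0) hm.le

include hα hp hval hinj hord in
lemma En_lower_nonpos (hα0 : α ≤ 0) :
    ((((1-p) ^ (1+α)⁻¹ + p ^ (1+α)⁻¹) ^ n)) ^ (1+α)
      ≤ ∑ z : Fin n → Bool, bernoulliMass p z * (G z : ℝ) ^ α := by
  have h1α : (0:ℝ) < 1 + α := by linarith
  rw [← sum_mass_div_rpow hp hα]
  apply Finset.sum_le_sum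
  intro z _
  have hm : 0 < bernoulliMass p z := bernoulliMass_pos hp z
  have hms : 0 < bernoulliMass p z ^ (1+α)⁻¹ := Real.rpow_pos_of_pos hm _
  have hG1 : 1 ≤ G z := (Finset.mem_Icc.mp (hval z)).1
  have hGpos : (0:ℝ) < (G z : ℝ) := by exact_mod_cast Nat.lt_of_lt_of_le Nat.zero_lt_one hG1
  have hrank : (G z : ℝ) ≤ (((1-p) ^ (1+α)⁻¹ + p ^ (1+α)⁻¹) ^ n) / bernoulliMass p z ^ (1+α)⁻¹ :=
    (le_div_iff₀ hms).mpr (rank_mul_le hp hval hinj hord (by positivity) z)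
  exact mul_le_mul_of_nonneg_left
    (Real.rpow_le_rpow_of_nonpos hGpos hrank hα0) hm.le

end Bounds

section Holder

variable {p : ℝ} (hp : p ∈ Set.Ioo (0:ℝ) 1) {n : ℕ} {G : (Fin n → Bool) → ℕ}
  (hval : ∀ z, G z ∈ Finset.Icc 1 (2 ^ n)) (hinj : Function.Injective G)

include hp hval hinj in
lemma En_lower_pos {α : ℝ} (hα0 : 0 < α) :
    ((((1-p) ^ (1+α)⁻¹ + p ^ (1+α)⁻¹) ^ n)) ^ (1+α) / ((n:ℝ)+1) ^ α
      ≤ ∑ z : Fin n → Bool, bernoulliMass p z * (G z : ℝ) ^ α := by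
  have hα : (-1:ℝ) < α := by linarith
  have h1α : (0:ℝ) < 1 + α := by linarith
  set s : ℝ := (1+α)⁻¹ with hs
  set u : ℝ := 1 + α with hu
  set v : ℝ := (1 + α) / α with hv
  have hv0 : 0 < v := by rw [hv]; positivity
  have hGpos : ∀ z : Fin n → Bool, (0:ℝ) < (G z : ℝ) := by
    intro z
    have hG1 : 1 ≤ G z := (Finset.mem_Icc.mp (hval z)).1
    exact_mod_cast Nat.lt_of_lt_of_le Nat.zero_lt_one hG1
  have hconj : Real.HolderConjugate u v := by
    rw [Real.holderConjugate_iff]; constructor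
    · rw [hu]; linarith
    · rw [hu, hv]; field_simp
  have htermpos : ∀ z : Fin n → Bool, (0:ℝ) < bernoulliMass p z * (G z : ℝ) ^ α :=
    fun z => mul_pos (bernoulliMass_pos hp z) (Real.rpow_pos_of_pos (hGpos z) α)
  have hE0 : (0:ℝ) ≤ ∑ z : Fin n → Bool, bernoulliMass p z * (G z : ℝ) ^ α :=
    Finset.sum_nonneg fun z _ => (htermpos z).le
  have hH0 : (0:ℝ) ≤ ∑ z : Fin n → Bool, ((G z : ℕ) : ℝ)⁻¹ :=
    Finset.sum_nonneg fun z _ => (inv_pos.mpr (hGpos z)).le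
  have hold := Real.inner_le_Lp_mul_Lq_of_nonneg (s := Finset.univ)
    (f := fun z : Fin n → Bool => (bernoulliMass p z * (G z : ℝ) ^ α) ^ u⁻¹)
    (g := fun z : Fin n → Bool => (((G z : ℕ) : ℝ)⁻¹) ^ v⁻¹)
    hconj
    (fun z _ => Real.rpow_nonneg (htermpos z).le _)
    (fun z _ => Real.rpow_nonneg (inv_pos.mpr (hGpos z)).le _)
  have hfg : ∀ z : Fin n → Bool,
      (bernoulliMass p z * (G z : ℝ) ^ α) ^ u⁻¹ * ((((G z : ℕ) : ℝ))⁻¹) ^ v⁻¹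
        = bernoulliMass p z ^ s := by
    intro z
    have hm := bernoulliMass_pos hp z
    rw [Real.mul_rpow hm.le (Real.rpow_nonneg (hGpos z).le α),
      ← Real.rpow_neg_one ((G z : ℝ)),
      ← Real.rpow_mul (Nat.cast_nonneg (G z)),
      ← Real.rpow_mul (Nat.cast_nonneg (G z)),
      mul_assoc,
      ← Real.rpow_add (hGpos z)]
    have hexp : α * u⁻¹ + -1 * v⁻¹ = 0 := by
      rw [hu, hv]; field_simp; ring
    rw [hexp, Real.rpow_zero, mul_one, hs]
  have hfu : ∀ z : Fin n → Bool,
      ((bernoulliMass p z * (G z : ℝ) ^ α) ^ u⁻¹) ^ u = bernoulliMass p z * (G z : ℝ) ^ α := by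
    intro z
    rw [← Real.rpow_mul (htermpos z).le, inv_mul_cancel₀ hconj.pos.ne', Real.rpow_one]
  have hgv : ∀ z : Fin n → Bool,
      (((((G z : ℕ) : ℝ))⁻¹) ^ v⁻¹) ^ v = (((G z : ℕ) : ℝ))⁻¹ := by
    intro z
    rw [← Real.rpow_mul (inv_pos.mpr (hGpos z)).le, inv_mul_cancel₀ hv0.ne', Real.rpow_one]
  simp only [hfg, hfu, hgv] at hold
  rw [sum_bernoulliMass_rpow hp n s] at hold
  have hHle : ∑ z : Fin n → Bool, ((G z : ℕ) : ℝ)⁻¹ ≤ (n:ℝ) + 1 := sum_G_inv_le hval hinj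
  have h2 : ((1-p) ^ s + p ^ s) ^ n
      ≤ (∑ z : Fin n → Bool, bernoulliMass p z * (G z : ℝ) ^ α) ^ (1/u) * ((n:ℝ)+1) ^ (1/v) := by
    refine le_trans hold (mul_le_mul_of_nonneg_left ?_ (Real.rpow_nonneg hE0 _))
    exact Real.rpow_le_rpow hH0 hHle (by positivity)
  have h3 := Real.rpow_le_rpow (pow_pos (B_pos hp) n).le h2 hconj.pos.le
  rw [Real.mul_rpow (Real.rpow_nonneg hE0 _) (Real.rpow_nonneg (by positivity) _),
    ← Real.rpow_mul hE0, ← Real.rpow_mul (by positivity : (0:ℝ) ≤ (n:ℝ)+1),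
    one_div_mul_cancel hconj.pos.ne', Real.rpow_one] at h3
  have hvu : 1 / v * u = α := by
    rw [hu, hv]; field_simp
  rw [hvu] at h3
  rw [div_le_iff₀ (Real.rpow_pos_of_pos (by positivity) α)]
  exact h3

include hp hval hinj in
lemma En_upper_neg {α : ℝ} (hα : (-1:ℝ) < α) (hα0 : α < 0) :
    ∑ z : Fin n → Bool, bernoulliMass p z * (G z : ℝ) ^ α
      ≤ ((((1-p) ^ (1+α)⁻¹ + p ^ (1+α)⁻¹) ^ n)) ^ (1+α) * ((n:ℝ)+1) ^ (-α) := by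
  have h1α : (0:ℝ) < 1 + α := by linarith
  have h1α1 : 1 + α < 1 := by linarith
  set s : ℝ := (1+α)⁻¹ with hs
  set u : ℝ := (1 + α)⁻¹ with hu
  set v : ℝ := (-α)⁻¹ with hv
  have hv0 : 0 < v := by rw [hv]; have : 0 < -α := by linarith
                         positivity
  have hGpos : ∀ z : Fin n → Bool, (0:ℝ) < (G z : ℝ) := by
    intro z
    have hG1 : 1 ≤ G z := (Finset.mem_Icc.mp (hval z)).1
    exact_mod_cast Nat.lt_of_lt_of_le Nat.zero_lt_one hG1
  have hconj : Real.HolderConjugate u v := by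
    rw [Real.holderConjugate_iff]; constructor
    · rw [hu]
      exact one_lt_inv₀ h1α |>.mpr h1α1
    · rw [hu, hv, inv_inv, inv_inv]; ring
  have hH0 : (0:ℝ) ≤ ∑ z : Fin n → Bool, ((G z : ℕ) : ℝ)⁻¹ :=
    Finset.sum_nonneg fun z _ => (inv_pos.mpr (hGpos z)).le
  have hold := Real.inner_le_Lp_mul_Lq_of_nonneg (s := Finset.univ)
    (f := fun z : Fin n → Bool => bernoulliMass p z)
    (g := fun z : Fin n → Bool => (G z : ℝ) ^ α)
    hconj
    (fun z _ => (bernoulliMass_pos hp z).le)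
    (fun z _ => (Real.rpow_pos_of_pos (hGpos z) α).le)
  have hgv : ∀ z : Fin n → Bool, ((G z : ℝ) ^ α) ^ v = (((G z : ℕ) : ℝ))⁻¹ := by
    intro z
    rw [← Real.rpow_mul (Nat.cast_nonneg (G z))]
    have : α * v = -1 := by
      have hαne : α ≠ 0 := ne_of_lt hα0
      rw [hv, inv_neg, mul_neg, mul_inv_cancel₀ hαne]
    rw [this, Real.rpow_neg_one]
  have hfu : ∀ z : Fin n → Bool, bernoulliMass p z ^ u = bernoulliMass p z ^ s := by
    intro z; rw [hu, hs]
  simp only [hgv, hfu] at hold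
  rw [sum_bernoulliMass_rpow hp n s] at hold
  have hHle : ∑ z : Fin n → Bool, ((G z : ℕ) : ℝ)⁻¹ ≤ (n:ℝ) + 1 := sum_G_inv_le hval hinj
  have h1u : 1 / u = 1 + α := by rw [hu, one_div, inv_inv]
  have h1v : 1 / v = -α := by rw [hv, one_div, inv_inv]
  rw [h1u, h1v] at hold
  refine le_trans hold (mul_le_mul_of_nonneg_left ?_ (Real.rpow_nonneg (pow_pos (B_pos hp) n).le _))
  exact Real.rpow_le_rpow hH0 hHle (by linarith)

end Holder

section Tail

variable {p : ℝ} (hp : p ∈ Set.Ioo (0:ℝ) 1) {n : ℕ} {G : (Fin n → Bool) → ℕ}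
  (hval : ∀ z, G z ∈ Finset.Icc 1 (2 ^ n)) (hinj : Function.Injective G)
  (hord : ∀ z z' : Fin n → Bool, G z ≤ G z' → bernoulliMass p z' ≤ bernoulliMass p z)

lemma mass_true : bernoulliMass p (fun _ : Fin n => true) = p ^ n := by
  unfold bernoulliMass hammingWeight
  simp

lemma mass_false : bernoulliMass p (fun _ : Fin n => false) = (1 - p) ^ n := by
  unfold bernoulliMass hammingWeight
  simp

include hp hval hinj hord in
lemma En_lower_tail (α : ℝ) :
    max (1 - p) p ^ n ≤ ∑ z : Fin n → Bool, bernoulliMass p z * (G z : ℝ) ^ α := by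
  have h1 : (1:ℕ) ∈ Finset.Icc 1 (2 ^ n) := Finset.mem_Icc.mpr ⟨le_refl _, Nat.one_le_two_pow⟩
  rw [← image_G hval hinj] at h1
  obtain ⟨z₁, _, hz₁⟩ := Finset.mem_image.mp h1
  have hGpos : ∀ z : Fin n → Bool, (0:ℝ) < (G z : ℝ) := by
    intro z
    have hG1 : 1 ≤ G z := (Finset.mem_Icc.mp (hval z)).1
    exact_mod_cast Nat.lt_of_lt_of_le Nat.zero_lt_one hG1
  have hmax : max (1 - p) p ^ n ≤ bernoulliMass p z₁ := by
    rcases max_cases (1 - p) p with ⟨heq, _⟩ | ⟨heq, _⟩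
    · rw [heq, ← mass_false (p := p) (n := n)]
      exact hord z₁ _ (by rw [hz₁]; exact (Finset.mem_Icc.mp (hval _)).1)
    · rw [heq, ← mass_true (p := p) (n := n)]
      exact hord z₁ _ (by rw [hz₁]; exact (Finset.mem_Icc.mp (hval _)).1)
  calc max (1 - p) p ^ n ≤ bernoulliMass p z₁ := hmax
    _ = bernoulliMass p z₁ * (G z₁ : ℝ) ^ α := by rw [hz₁]; simp
    _ ≤ ∑ z : Fin n → Bool, bernoulliMass p z * (G z : ℝ) ^ α := by
        apply Finset.single_le_sum (f := fun z => bernoulliMass p z * (G z : ℝ) ^ α)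
          (fun z _ => mul_nonneg (bernoulliMass_pos hp z).le
            (Real.rpow_pos_of_pos (hGpos z) α).le) (Finset.mem_univ z₁)

include hp hval hinj in
lemma En_upper_tail {α : ℝ} (hα : α ≤ -1) :
    ∑ z : Fin n → Bool, bernoulliMass p z * (G z : ℝ) ^ α
      ≤ max (1 - p) p ^ n * ((n:ℝ) + 1) := by
  have hM : (0:ℝ) < max (1 - p) p := lt_max_of_lt_right hp.1
  calc ∑ z : Fin n → Bool, bernoulliMass p z * (G z : ℝ) ^ α
      ≤ ∑ z : Fin n → Bool, max (1 - p) p ^ n * ((G z : ℕ) : ℝ)⁻¹ := by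
        apply Finset.sum_le_sum
        intro z _
        have hG1 : (1:ℝ) ≤ (G z : ℝ) := by
          exact_mod_cast (Finset.mem_Icc.mp (hval z)).1
        have h2 : (G z : ℝ) ^ α ≤ ((G z : ℕ) : ℝ)⁻¹ := by
          rw [← Real.rpow_neg_one ((G z : ℝ))]
          exact Real.rpow_le_rpow_of_exponent_le hG1 hα
        exact mul_le_mul (bernoulliMass_le_max_pow hp z) h2
          (Real.rpow_nonneg (by linarith) α) (by positivity)
    _ = max (1 - p) p ^ n * ∑ z : Fin n → Bool, ((G z : ℕ) : ℝ)⁻¹ := by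
        rw [Finset.mul_sum]
    _ ≤ max (1 - p) p ^ n * ((n:ℝ) + 1) := by
        exact mul_le_mul_of_nonneg_left (sum_G_inv_le hval hinj) (by positivity)

end Tail

lemma En_pos {p : ℝ} (hp : p ∈ Set.Ioo (0:ℝ) 1) {n : ℕ} {G : (Fin n → Bool) → ℕ}
    (hval : ∀ z, G z ∈ Finset.Icc 1 (2 ^ n)) (α : ℝ) :
    0 < ∑ z : Fin n → Bool, bernoulliMass p z * (G z : ℝ) ^ α := by
  apply Finset.sum_pos
  · intro z _
    have hG1 : 1 ≤ G z := (Finset.mem_Icc.mp (hval z)).1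
    have hGpos : (0:ℝ) < (G z : ℝ) := by exact_mod_cast Nat.lt_of_lt_of_le Nat.zero_lt_one hG1
    exact mul_pos (bernoulliMass_pos hp z) (Real.rpow_pos_of_pos hGpos α)
  · exact Finset.univ_nonempty

/-- Guesswork moment exponents for i.i.d. Bernoulli(p) noise:
for any guesswork order `Gₙ`, for `α ∈ (-1, ∞)`,
`(1/n) log₂ E[Gₙ(Nⁿ)^α] → (1+α) log₂((1-p)^{1/(1+α)} + p^{1/(1+α)})`,
and for `α ≤ -1` the limit is `log₂(max(1-p, p))`. -/
theorem guesswork_moment_exponents_bernoulli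
    (p : ℝ) (hp : p ∈ Set.Ioo (0:ℝ) 1)
    (Gn : (n : ℕ) → (Fin n → Bool) → ℕ)
    (hval : ∀ n z, Gn n z ∈ Finset.Icc 1 (2 ^ n))
    (hinj : ∀ n, Function.Injective (Gn n))
    (hord : ∀ n, ∀ z z' : Fin n → Bool, Gn n z ≤ Gn n z' →
      bernoulliMass p z' ≤ bernoulliMass p z) :
    (∀ α : ℝ, -1 < α →
      Filter.Tendsto
        (fun n : ℕ =>
          (n : ℝ)⁻¹ *
            Real.logb 2 (∑ z : Fin n → Bool, bernoulliMass p z * (Gn n z : ℝ) ^ α))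
        Filter.atTop
        (nhds ((1 + α) * Real.logb 2 ((1 - p) ^ (1 + α)⁻¹ + p ^ (1 + α)⁻¹)))) ∧
    (∀ α : ℝ, α ≤ -1 →
      Filter.Tendsto
        (fun n : ℕ =>
          (n : ℝ)⁻¹ *
            Real.logb 2 (∑ z : Fin n → Bool, bernoulliMass p z * (Gn n z : ℝ) ^ α))
        Filter.atTop
        (nhds (Real.logb 2 (max (1 - p) p)))) := by
  have h1 : 0 < p := hp.1
  have h2 : 0 < 1 - p := by have := hp.2; linarith
  constructor
  · intro α hα
    have h1α : (0:ℝ) < 1 + α := by linarith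
    rcases eq_or_ne α 0 with rfl | hαne
    · have hE : ∀ n : ℕ,
          (∑ z : Fin n → Bool, bernoulliMass p z * (Gn n z : ℝ) ^ (0:ℝ)) = 1 := by
        intro n
        have hterm : ∀ z : Fin n → Bool,
            bernoulliMass p z * (Gn n z : ℝ) ^ (0:ℝ) = bernoulliMass p z ^ (1:ℝ) := by
          intro z; rw [Real.rpow_zero, mul_one, Real.rpow_one]
        rw [Finset.sum_congr rfl (fun z _ => hterm z), sum_bernoulliMass_rpow hp n 1]
        rw [Real.rpow_one, Real.rpow_one]
        norm_num
      simp only [hE]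
      have hgoal : (1 + (0:ℝ)) * Real.logb 2 ((1-p) ^ (1+(0:ℝ))⁻¹ + p ^ (1+(0:ℝ))⁻¹) = 0 := by
        norm_num
      rw [hgoal]
      simpa using tendsto_const_nhds
    · set B := (1-p) ^ (1+α)⁻¹ + p ^ (1+α)⁻¹ with hB
      have hBpos : 0 < B := B_pos hp
      have hlogBn : ∀ n : ℕ, Real.logb 2 ((B ^ n) ^ (1+α))
          = (n:ℝ) * ((1+α) * Real.logb 2 B) := by
        intro n
        rw [Real.logb_rpow_eq_mul_logb_of_pos (pow_pos hBpos n), Real.logb_pow]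
        ring
      have hlogn1 : ∀ n : ℕ, (0:ℝ) ≤ Real.logb 2 ((n:ℝ)+1) := by
        intro n
        apply Real.logb_nonneg one_lt_two
        have : (0:ℝ) ≤ (n:ℝ) := Nat.cast_nonneg n
        linarith
      apply tendsto_inv_mul_logb _ ((1+α) * Real.logb 2 B) |α|
      · -- lower bound
        intro n
        rcases lt_or_gt_of_ne hαne with hneg | hpos
        · -- α < 0 : E ≥ (B^n)^(1+α)
          have hEl := En_lower_nonpos hp (hval n) (hinj n) (hord n) hα hneg.le
          have := Real.logb_le_logb_of_le one_lt_two
            (Real.rpow_pos_of_pos (pow_pos hBpos n) (1+α)) hEl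
          rw [hlogBn n] at this
          have habs : 0 ≤ |α| * Real.logb 2 ((n:ℝ)+1) :=
            mul_nonneg (abs_nonneg α) (hlogn1 n)
          linarith
        · -- α > 0 : E ≥ (B^n)^(1+α) / (n+1)^α
          have hEl := En_lower_pos hp (hval n) (hinj n) hpos
          have hlpos : 0 < ((B ^ n) ^ (1+α)) / ((n:ℝ)+1) ^ α := by
            apply div_pos (Real.rpow_pos_of_pos (pow_pos hBpos n) _)
              (Real.rpow_pos_of_pos (by positivity) _)
          have := Real.logb_le_logb_of_le one_lt_two hlpos hEl
          rw [Real.logb_div (Real.rpow_pos_of_pos (pow_pos hBpos n) _).ne'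
            (Real.rpow_pos_of_pos (by positivity) _).ne', hlogBn n,
            Real.logb_rpow_eq_mul_logb_of_pos (by positivity)] at this
          rw [abs_of_pos hpos]
          linarith
      · -- upper bound
        intro n
        have hEpos := En_pos hp (hval n) α
        rcases lt_or_gt_of_ne hαne with hneg | hpos
        · -- α < 0 : E ≤ (B^n)^(1+α) * (n+1)^(-α)
          have hEu := En_upper_neg hp (hval n) (hinj n) hα hneg
          have := Real.logb_le_logb_of_le one_lt_two hEpos hEu
          rw [Real.logb_mul (Real.rpow_pos_of_pos (pow_pos hBpos n) _).ne'
            (Real.rpow_pos_of_pos (by positivity) _).ne', hlogBn n,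
            Real.logb_rpow_eq_mul_logb_of_pos (by positivity)] at this
          rw [abs_of_neg hneg]
          linarith
        · -- α > 0 : E ≤ (B^n)^(1+α)
          have hEu := En_upper_nonneg hp (hval n) (hinj n) (hord n) hα hpos.le
          have := Real.logb_le_logb_of_le one_lt_two hEpos hEu
          rw [hlogBn n] at this
          have habs : 0 ≤ |α| * Real.logb 2 ((n:ℝ)+1) :=
            mul_nonneg (abs_nonneg α) (hlogn1 n)
          linarith
  · intro α hα
    have hM : (0:ℝ) < max (1-p) p := lt_max_of_lt_right h1
    have hlogn1 : ∀ n : ℕ, (0:ℝ) ≤ Real.logb 2 ((n:ℝ)+1) := by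
      intro n
      apply Real.logb_nonneg one_lt_two
      have : (0:ℝ) ≤ (n:ℝ) := Nat.cast_nonneg n
      linarith
    apply tendsto_inv_mul_logb _ (Real.logb 2 (max (1-p) p)) 1
    · intro n
      have hEl := En_lower_tail hp (hval n) (hinj n) (hord n) α
      have := Real.logb_le_logb_of_le one_lt_two (pow_pos hM n) hEl
      rw [Real.logb_pow] at this
      have := hlogn1 n
      linarith
    · intro n
      have hEpos := En_pos hp (hval n) α
      have hEu := En_upper_tail hp (hval n) (hinj n) hα
      have := Real.logb_le_logb_of_le one_lt_two hEpos hEu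
      rw [Real.logb_mul (pow_pos hM n).ne' (by positivity : ((n:ℝ)+1) ≠ 0),
        Real.logb_pow] at this
      linarith
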